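/- Let α ∈ (0,1) be irrational and θ ∈ [0,1), and let W be the word 1 0^{c₁} 1 (a one, then c₁ zeros, then a one), where c₁ = ⌊1/α⌋. The frequency of occurrences of W in the Sturmian sequence ω(n) = χ_{[1-α,1)}(nα+θ mod 1) exists and equals 1 - c₁·α; i.e., (1/N)·#{n ∈ {0,...,N-1} : ω(n+j) = W(j) for all 0 ≤ j ≤ c₁+1} → 1 - c₁α. -/

import Mathlib

open Filter

/-- The Sturmian sequence of slope `α` and phase `θ`:
`ω(n) = 1` iff `nα + θ mod 1 ∈ [1-α, 1)`, and `0` otherwise. -/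
noncomputable def sturmian (α θ : ℝ) (n : ℤ) : ℕ :=
  if 1 - α ≤ Int.fract ((n : ℝ) * α + θ) ∧ Int.fract ((n : ℝ) * α + θ) < 1 then 1 else 0

open Filter MeasureTheory Finset Topology


instance fact_zero_lt_one_real : Fact ((0:ℝ) < 1) := ⟨one_pos⟩

noncomputable section

lemma contIntegrable {E : Type*} [NormedAddCommGroup E] (f : AddCircle (1:ℝ) → E)
    (hf : Continuous f) : Integrable f := by
  have := hf.continuousOn.integrableOn_compact (μ := volume) (isCompact_univ (X := AddCircle (1:ℝ)))
  rwa [IntegrableOn, Measure.restrict_univ] at this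

instance : IsProbabilityMeasure (volume : Measure (AddCircle (1:ℝ))) :=
  ⟨by simp [AddCircle.measure_univ (T := (1:ℝ))]⟩

lemma integral_fourier_ne_zero {k : ℤ} (hk : k ≠ 0) :
    ∫ x : AddCircle (1:ℝ), fourier k x = 0 := by
  have h2 : (2 * Real.pi * Complex.I * k) ≠ 0 := by
    simp [Real.pi_ne_zero, Complex.I_ne_zero, hk]
  rw [← AddCircle.intervalIntegral_preimage 1 0]
  have : ∀ x : ℝ, fourier k (x : AddCircle (1:ℝ)) = Complex.exp ((2 * Real.pi * Complex.I * k) * x) := by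
    intro x
    rw [fourier_coe_apply]
    norm_num
  rw [intervalIntegral.integral_congr (fun x _ => this x)]
  rw [show (0:ℝ) + 1 = 1 by norm_num, integral_exp_mul_complex h2]
  simp only [Complex.ofReal_one, mul_one, Complex.ofReal_zero, mul_zero, Complex.exp_zero]
  rw [show (2 * Real.pi * Complex.I * k) = k * (2 * Real.pi * Complex.I) by ring,
    Complex.exp_int_mul_two_pi_mul_I]
  simp

lemma weyl_fourier (α θ : ℝ) (hirr : Irrational α) (k : ℤ) :
    Tendsto (fun N : ℕ => (∑ n ∈ Finset.range N,
        fourier k ((((n : ℝ) * α + θ : ℝ) : AddCircle (1:ℝ)))) / N)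
      atTop (𝓝 (∫ x : AddCircle (1:ℝ), fourier k x)) := by
  rcases eq_or_ne k 0 with rfl | hk
  · have h1 : ∀ N : ℕ, (∑ n ∈ Finset.range N,
        fourier (0:ℤ) ((((n : ℝ) * α + θ : ℝ) : AddCircle (1:ℝ)))) = (N : ℂ) := by
      intro N
      simp [fourier_zero]
    simp only [h1]
    have h2 : ∫ x : AddCircle (1:ℝ), fourier (0:ℤ) x = 1 := by
      have : (fun x : AddCircle (1:ℝ) => fourier (0:ℤ) x) = fun _ => (1:ℂ) := by
        ext x; exact fourier_zero
      rw [this, integral_const]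
      simp
    rw [h2]
    refine tendsto_atTop_of_eventually_const (i₀ := 1) (fun N hN => ?_)
    rw [div_self]
    exact_mod_cast Nat.pos_of_ne_zero (by omega) |>.ne'
  · set z : ℂ := Complex.exp (2 * Real.pi * Complex.I * k * α) with hz
    have hzne : z ≠ 1 := by
      intro h
      rw [hz, Complex.exp_eq_one_iff] at h
      obtain ⟨m, hm⟩ := h
      have hπ : (2 * Real.pi * Complex.I : ℂ) ≠ 0 := by
        simp [Real.pi_ne_zero, Complex.I_ne_zero]
      have h3 : (k : ℂ) * (α : ℂ) = (m : ℂ) := mul_right_cancel₀ hπ (by linear_combination hm)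
      have h4 : (k : ℝ) * α = (m : ℝ) := by exact_mod_cast h3
      exact (hirr.intCast_mul hk).ne_int m h4
    have hterm : ∀ n : ℕ, fourier k ((((n : ℝ) * α + θ : ℝ) : AddCircle (1:ℝ)))
        = Complex.exp (2 * Real.pi * Complex.I * k * θ) * z ^ n := by
      intro n
      rw [fourier_coe_apply]
      rw [hz, ← Complex.exp_nat_mul, ← Complex.exp_add]
      norm_num
      ring_nf
    have hsum : ∀ N : ℕ, (∑ n ∈ Finset.range N,
        fourier k ((((n : ℝ) * α + θ : ℝ) : AddCircle (1:ℝ))))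
        = Complex.exp (2 * Real.pi * Complex.I * k * θ) * ((z ^ N - 1) / (z - 1)) := by
      intro N
      simp only [hterm, ← Finset.mul_sum, geom_sum_eq hzne]
    rw [integral_fourier_ne_zero hk]
    have hb : ∀ N : ℕ, ‖(∑ n ∈ Finset.range N,
        fourier k ((((n : ℝ) * α + θ : ℝ) : AddCircle (1:ℝ)))) / N‖ ≤ (2 / ‖z - 1‖) / N := by
      intro N
      have habs : ∀ c : ℝ, ‖Complex.exp (2 * Real.pi * Complex.I * k * c)‖ = 1 := by
        intro c
        rw [show (2 * Real.pi * Complex.I * k * c : ℂ) = ((2 * Real.pi * k * c : ℝ) : ℂ) * Complex.I by push_cast; ring]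
        rw [Complex.norm_exp_ofReal_mul_I]
      have hzN : ‖z ^ N‖ = 1 := by
        rw [norm_pow, habs α, one_pow]
      rw [hsum, norm_div, norm_mul, habs θ, one_mul, norm_div]
      rw [Complex.norm_natCast]
      rcases Nat.eq_zero_or_pos N with rfl | hN
      · simp
      gcongr
      calc ‖z ^ N - 1‖ ≤ ‖z ^ N‖ + ‖(1:ℂ)‖ := norm_sub_le _ _
        _ = 2 := by rw [hzN, norm_one]; norm_num
    refine squeeze_zero_norm hb ?_
    exact tendsto_const_div_atTop_nhds_zero_nat _

lemma weyl_complex (α θ : ℝ) (hirr : Irrational α) (f : C(AddCircle (1:ℝ), ℂ)) :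
    Tendsto (fun N : ℕ => (∑ n ∈ Finset.range N,
        f (((n : ℝ) * α + θ : ℝ) : AddCircle (1:ℝ))) / N)
      atTop (𝓝 (∫ x : AddCircle (1:ℝ), f x)) := by
  set A : ℕ → C(AddCircle (1:ℝ), ℂ) → ℂ := fun N g =>
    (∑ n ∈ Finset.range N, g (((n : ℝ) * α + θ : ℝ) : AddCircle (1:ℝ))) / N with hA
  have hint : ∀ g : C(AddCircle (1:ℝ), ℂ), Integrable g :=
    fun g => contIntegrable _ g.continuous
  have bA : ∀ (g : C(AddCircle (1:ℝ), ℂ)) (N : ℕ), ‖A N g‖ ≤ ‖g‖ := by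
    intro g N
    rcases Nat.eq_zero_or_pos N with rfl | hN
    · simp [hA]
    rw [hA]
    simp only [norm_div, Complex.norm_natCast]
    rw [div_le_iff₀ (by positivity)]
    calc ‖∑ n ∈ Finset.range N, g (((n : ℝ) * α + θ : ℝ) : AddCircle (1:ℝ))‖
        ≤ ∑ n ∈ Finset.range N, ‖g (((n : ℝ) * α + θ : ℝ) : AddCircle (1:ℝ))‖ :=
          norm_sum_le _ _
      _ ≤ ∑ n ∈ Finset.range N, ‖g‖ :=
          Finset.sum_le_sum fun n _ => g.norm_coe_le_norm _
      _ = ‖g‖ * N := by rw [Finset.sum_const, Finset.card_range, nsmul_eq_mul, mul_comm]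
  have bI : ∀ g : C(AddCircle (1:ℝ), ℂ), ‖∫ x : AddCircle (1:ℝ), g x‖ ≤ ‖g‖ := by
    intro g
    calc ‖∫ x : AddCircle (1:ℝ), g x‖ ≤ ‖g‖ * (volume (Set.univ : Set (AddCircle (1:ℝ)))).toReal :=
      norm_integral_le_of_norm_le_const (Filter.Eventually.of_forall fun x => g.norm_coe_le_norm x)
      _ = ‖g‖ := by simp
  have hspan : ∀ g ∈ Submodule.span ℂ (Set.range (@fourier 1)),
      Tendsto (fun N => A N g) atTop (𝓝 (∫ x : AddCircle (1:ℝ), g x)) := by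
    intro g hg
    induction hg using Submodule.span_induction with
    | mem g hg =>
      obtain ⟨k, rfl⟩ := hg
      exact weyl_fourier α θ hirr k
    | zero =>
      simp only [hA]
      simpa using tendsto_const_nhds
    | add g₁ g₂ _ _ h₁ h₂ =>
      have : ∀ N, A N (g₁ + g₂) = A N g₁ + A N g₂ := by
        intro N
        simp [hA, Finset.sum_add_distrib, add_div]
      simp only [this]
      rw [show (∫ x : AddCircle (1:ℝ), (g₁ + g₂) x) =
        (∫ x : AddCircle (1:ℝ), g₁ x) + ∫ x : AddCircle (1:ℝ), g₂ x by
          simp only [ContinuousMap.add_apply]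
          exact integral_add (hint g₁) (hint g₂)]
      exact h₁.add h₂
    | smul c g _ h =>
      have : ∀ N, A N (c • g) = c * A N g := by
        intro N
        simp only [hA, ContinuousMap.smul_apply, smul_eq_mul]
        rw [← Finset.mul_sum, mul_div_assoc]
      simp only [this]
      rw [show (∫ x : AddCircle (1:ℝ), (c • g) x) = c * ∫ x : AddCircle (1:ℝ), g x by
        simp only [ContinuousMap.smul_apply, smul_eq_mul]
        rw [← integral_const_mul]]
      exact (h.const_mul c)
  rw [Metric.tendsto_atTop]
  intro ε hε
  have hf : f ∈ closure ((Submodule.span ℂ (Set.range (@fourier 1)) : Submodule ℂ _) : Set _) := by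
    rw [← Submodule.topologicalClosure_coe, span_fourier_closure_eq_top]
    trivial
  obtain ⟨P, hPmem, hPdist⟩ := Metric.mem_closure_iff.mp hf (ε/3) (by linarith)
  have hP := hspan P hPmem
  rw [Metric.tendsto_atTop] at hP
  obtain ⟨N₀, hN₀⟩ := hP (ε/3) (by linarith)
  refine ⟨N₀, fun N hN => ?_⟩
  have h1 : dist (A N f) (A N P) < ε/3 := by
    rw [dist_eq_norm]
    have he : A N f - A N P = A N (f - P) := by
      simp [hA, Finset.sum_sub_distrib, sub_div]
    rw [he]
    calc ‖A N (f - P)‖ ≤ ‖f - P‖ := bA _ _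
      _ = dist f P := (dist_eq_norm f P).symm
      _ < ε/3 := hPdist
  have h2 : dist (∫ x : AddCircle (1:ℝ), P x) (∫ x : AddCircle (1:ℝ), f x) < ε/3 := by
    rw [dist_eq_norm]
    have he : (∫ x : AddCircle (1:ℝ), P x) - (∫ x : AddCircle (1:ℝ), f x)
        = ∫ x : AddCircle (1:ℝ), (P - f) x := by
      simp only [ContinuousMap.sub_apply]
      rw [integral_sub (hint P) (hint f)]
    rw [he]
    calc ‖∫ x : AddCircle (1:ℝ), (P - f) x‖ ≤ ‖P - f‖ := bI _
      _ = dist P f := (dist_eq_norm P f).symm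
      _ < ε/3 := by rw [dist_comm]; exact hPdist
  calc dist (A N f) (∫ x : AddCircle (1:ℝ), f x)
      ≤ dist (A N f) (A N P) + dist (A N P) (∫ x : AddCircle (1:ℝ), P x)
        + dist (∫ x : AddCircle (1:ℝ), P x) (∫ x : AddCircle (1:ℝ), f x) := dist_triangle4 _ _ _ _
    _ < ε/3 + ε/3 + ε/3 := by
        have := hN₀ N hN
        linarith
    _ = ε := by ring

lemma weyl_real (α θ : ℝ) (hirr : Irrational α) (f : C(AddCircle (1:ℝ), ℝ)) :
    Tendsto (fun N : ℕ => (∑ n ∈ Finset.range N,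
        f (((n : ℝ) * α + θ : ℝ) : AddCircle (1:ℝ))) / N)
      atTop (𝓝 (∫ x : AddCircle (1:ℝ), f x)) := by
  have key := weyl_complex α θ hirr
    (ContinuousMap.comp ⟨Complex.ofReal, Complex.continuous_ofReal⟩ f)
  have h1 : ∀ N : ℕ, (∑ n ∈ Finset.range N,
      (ContinuousMap.comp ⟨Complex.ofReal, Complex.continuous_ofReal⟩ f)
        (((n : ℝ) * α + θ : ℝ) : AddCircle (1:ℝ))) / (N:ℂ)
      = (((∑ n ∈ Finset.range N, f (((n : ℝ) * α + θ : ℝ) : AddCircle (1:ℝ))) / N : ℝ) : ℂ) := by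
    intro N
    push_cast
    simp
  have h2 : (∫ x : AddCircle (1:ℝ),
      (ContinuousMap.comp ⟨Complex.ofReal, Complex.continuous_ofReal⟩ f) x)
      = ((∫ x : AddCircle (1:ℝ), f x : ℝ) : ℂ) := by
    simp only [ContinuousMap.comp_apply, ContinuousMap.coe_mk]
    exact integral_ofReal
  simp only [h1, h2] at key
  have := (Complex.continuous_re.tendsto _).comp key
  rw [Complex.ofReal_re] at this
  refine this.congr (fun N => ?_)
  simp [Function.comp]

/-- trapezoid bump function -/
def trap (u v δ x : ℝ) : ℝ := max 0 (min 1 (min ((x - u)/δ) ((v - x)/δ)))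

lemma trap_continuous (u v δ : ℝ) : Continuous (trap u v δ) := by
  unfold trap; fun_prop

lemma trap_nonneg (u v δ x : ℝ) : 0 ≤ trap u v δ x := le_max_left _ _

lemma trap_le_one (u v δ x : ℝ) : trap u v δ x ≤ 1 := by
  unfold trap
  rw [max_le_iff]
  exact ⟨zero_le_one, min_le_left _ _⟩

lemma trap_eq_zero_left (u v δ : ℝ) (hδ : 0 < δ) {x : ℝ} (hx : x ≤ u) : trap u v δ x = 0 := by
  unfold trap
  have : (x - u)/δ ≤ 0 := div_nonpos_of_nonpos_of_nonneg (by linarith) hδ.le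
  have : min 1 (min ((x - u)/δ) ((v - x)/δ)) ≤ 0 :=
    le_trans (le_trans (min_le_right _ _) (min_le_left _ _)) this
  exact max_eq_left this

lemma trap_eq_zero_right (u v δ : ℝ) (hδ : 0 < δ) {x : ℝ} (hx : v ≤ x) : trap u v δ x = 0 := by
  unfold trap
  have : (v - x)/δ ≤ 0 := div_nonpos_of_nonpos_of_nonneg (by linarith) hδ.le
  have : min 1 (min ((x - u)/δ) ((v - x)/δ)) ≤ 0 :=
    le_trans (le_trans (min_le_right _ _) (min_le_right _ _)) this
  exact max_eq_left this

lemma trap_eq_one (u v δ : ℝ) (hδ : 0 < δ) {x : ℝ} (hx1 : u + δ ≤ x) (hx2 : x ≤ v - δ) :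
    trap u v δ x = 1 := by
  unfold trap
  have h1 : (1:ℝ) ≤ (x - u)/δ := (le_div_iff₀ hδ).mpr (by linarith)
  have h2 : (1:ℝ) ≤ (v - x)/δ := (le_div_iff₀ hδ).mpr (by linarith)
  rw [min_eq_left (le_min h1 h2), max_eq_right zero_le_one]

lemma trap_integral_le (u v δ : ℝ) (hδ : 0 < δ) (hu : 0 ≤ u) (huv : u ≤ v) (hv : v ≤ 1) :
    ∫ x in (0:ℝ)..1, trap u v δ x ≤ v - u := by
  have hi : ∀ s t : ℝ, IntervalIntegrable (trap u v δ) volume s t :=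
    fun s t => (trap_continuous u v δ).intervalIntegrable s t
  have e1 : ∫ x in (0:ℝ)..u, trap u v δ x = 0 := by
    rw [intervalIntegral.integral_congr (g := fun _ => 0)
      (fun x hx => ?_), intervalIntegral.integral_zero]
    rw [Set.uIcc_of_le hu] at hx
    exact trap_eq_zero_left u v δ hδ hx.2
  have e3 : ∫ x in v..(1:ℝ), trap u v δ x = 0 := by
    rw [intervalIntegral.integral_congr (g := fun _ => 0)
      (fun x hx => ?_), intervalIntegral.integral_zero]
    rw [Set.uIcc_of_le hv] at hx
    exact trap_eq_zero_right u v δ hδ hx.1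
  have e2 : ∫ x in u..v, trap u v δ x ≤ v - u := by
    calc ∫ x in u..v, trap u v δ x ≤ ∫ x in u..v, (1:ℝ) := by
          exact intervalIntegral.integral_mono_on huv (hi u v) intervalIntegrable_const
            (fun x _ => trap_le_one u v δ x)
      _ = v - u := by simp
  calc ∫ x in (0:ℝ)..1, trap u v δ x
      = (∫ x in (0:ℝ)..u, trap u v δ x) + (∫ x in u..v, trap u v δ x)
        + ∫ x in v..(1:ℝ), trap u v δ x := by
        rw [intervalIntegral.integral_add_adjacent_intervals (hi 0 u) (hi u v),
          intervalIntegral.integral_add_adjacent_intervals (hi 0 v) (hi v 1)]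
    _ ≤ v - u := by rw [e1, e3]; simpa using e2

lemma trap_integral_ge (u v δ : ℝ) (hδ : 0 < δ) (hu : 0 ≤ u) (huv : u + δ ≤ v - δ)
    (hv : v ≤ 1) : v - u - 2*δ ≤ ∫ x in (0:ℝ)..1, trap u v δ x := by
  have hi : ∀ s t : ℝ, IntervalIntegrable (trap u v δ) volume s t :=
    fun s t => (trap_continuous u v δ).intervalIntegrable s t
  have e1 : 0 ≤ ∫ x in (0:ℝ)..(u+δ), trap u v δ x :=
    intervalIntegral.integral_nonneg (by linarith) (fun x _ => trap_nonneg u v δ x)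
  have e3 : 0 ≤ ∫ x in (v-δ)..(1:ℝ), trap u v δ x :=
    intervalIntegral.integral_nonneg (by linarith) (fun x _ => trap_nonneg u v δ x)
  have e2 : v - u - 2*δ ≤ ∫ x in (u+δ)..(v-δ), trap u v δ x := by
    have : ∫ x in (u+δ)..(v-δ), trap u v δ x = ∫ x in (u+δ)..(v-δ), (1:ℝ) := by
      refine intervalIntegral.integral_congr (fun x hx => ?_)
      rw [Set.uIcc_of_le (by linarith)] at hx
      exact trap_eq_one u v δ hδ hx.1 hx.2
    rw [this]
    simp only [intervalIntegral.integral_const, smul_eq_mul, mul_one]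
    linarith
  calc v - u - 2*δ ≤ (∫ x in (0:ℝ)..(u+δ), trap u v δ x)
        + (∫ x in (u+δ)..(v-δ), trap u v δ x) + ∫ x in (v-δ)..(1:ℝ), trap u v δ x := by linarith
    _ = ∫ x in (0:ℝ)..1, trap u v δ x := by
        rw [intervalIntegral.integral_add_adjacent_intervals (hi 0 (u+δ)) (hi (u+δ) (v-δ)),
          intervalIntegral.integral_add_adjacent_intervals (hi 0 (v-δ)) (hi (v-δ) 1)]

lemma coe_fract (y : ℝ) : ((Int.fract y : ℝ) : AddCircle (1:ℝ)) = (y : AddCircle (1:ℝ)) := by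
  have h0 : ((((⌊y⌋ : ℤ)) : ℝ) : AddCircle (1:ℝ)) = 0 := by
    rw [AddCircle.coe_eq_zero_iff]
    exact ⟨⌊y⌋, by simp⟩
  have h1 : Int.fract y = y - ((⌊y⌋ : ℤ) : ℝ) := rfl
  rw [h1]
  rw [show (((y - ((⌊y⌋ : ℤ) : ℝ)) : ℝ) : AddCircle (1:ℝ))
    = ((y : ℝ) : AddCircle (1:ℝ)) - ((((⌊y⌋ : ℤ)) : ℝ) : AddCircle (1:ℝ)) from rfl, h0, sub_zero]

lemma equid_Ico (α θ : ℝ) (hirr : Irrational α) {a b : ℝ} (ha : 0 < a) (hab : a < b)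
    (hb : b < 1) :
    Tendsto (fun N : ℕ => (((Finset.range N).filter
        (fun n : ℕ => Int.fract ((n:ℝ) * α + θ) ∈ Set.Ico a b)).card : ℝ) / N)
      atTop (𝓝 (b - a)) := by
  rw [Metric.tendsto_atTop]
  intro ε hε
  set δ : ℝ := min (min (ε/4) (a/2)) (min ((1-b)/2) ((b-a)/2)) with hδdef
  have hδ : 0 < δ := by
    apply lt_min (lt_min (by linarith) (by linarith)) (lt_min (by linarith) (by linarith))
  have hδε : δ ≤ ε/4 := le_trans (min_le_left _ _) (min_le_left _ _)
  have hδa : δ ≤ a/2 := le_trans (min_le_left _ _) (min_le_right _ _)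
  have hδb : δ ≤ (1-b)/2 := le_trans (min_le_right _ _) (min_le_left _ _)
  have hδab : δ ≤ (b-a)/2 := le_trans (min_le_right _ _) (min_le_right _ _)
  set h : ℝ → ℝ := trap (a - δ) (b + δ) δ with hh
  set g : ℝ → ℝ := trap a b δ with hg
  have h01 : h 0 = h 1 := by
    rw [hh, trap_eq_zero_left _ _ _ hδ (by linarith), trap_eq_zero_right _ _ _ hδ (by linarith)]
  have g01 : g 0 = g 1 := by
    rw [hg, trap_eq_zero_left _ _ _ hδ (by linarith), trap_eq_zero_right _ _ _ hδ (by linarith)]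
  set H : C(AddCircle (1:ℝ), ℝ) := ⟨AddCircle.liftIco 1 0 h,
    AddCircle.liftIco_zero_continuous (by rw [h01]) (trap_continuous _ _ _).continuousOn⟩ with hH
  set G : C(AddCircle (1:ℝ), ℝ) := ⟨AddCircle.liftIco 1 0 g,
    AddCircle.liftIco_zero_continuous (by rw [g01]) (trap_continuous _ _ _).continuousOn⟩ with hG
  have fract_mem : ∀ y : ℝ, Int.fract y ∈ Set.Ico (0:ℝ) 1 :=
    fun y => ⟨Int.fract_nonneg y, Int.fract_lt_one y⟩
  have HH : ∀ y : ℝ, H ((y : ℝ) : AddCircle (1:ℝ)) = h (Int.fract y) := by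
    intro y
    rw [← coe_fract y]
    exact AddCircle.liftIco_zero_coe_apply (f := h)
      (Set.mem_Ico.mpr ⟨Int.fract_nonneg y, Int.fract_lt_one y⟩)
  have GG : ∀ y : ℝ, G ((y : ℝ) : AddCircle (1:ℝ)) = g (Int.fract y) := by
    intro y
    rw [← coe_fract y]
    exact AddCircle.liftIco_zero_coe_apply (f := g)
      (Set.mem_Ico.mpr ⟨Int.fract_nonneg y, Int.fract_lt_one y⟩)
  have intH : ∫ x : AddCircle (1:ℝ), H x = ∫ x in (0:ℝ)..1, h x := by
    rw [← AddCircle.intervalIntegral_preimage 1 0 H]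
    rw [zero_add]
    refine intervalIntegral.integral_congr (fun x hx => ?_)
    rw [HH x]
    rw [Set.uIcc_of_le zero_le_one] at hx
    rcases lt_or_eq_of_le hx.2 with hx1 | rfl
    · rw [Int.fract_eq_self.mpr ⟨hx.1, hx1⟩]
    · rw [show Int.fract (1:ℝ) = 0 by simp, h01]
  have intG : ∫ x : AddCircle (1:ℝ), G x = ∫ x in (0:ℝ)..1, g x := by
    rw [← AddCircle.intervalIntegral_preimage 1 0 G]
    rw [zero_add]
    refine intervalIntegral.integral_congr (fun x hx => ?_)
    rw [GG x]
    rw [Set.uIcc_of_le zero_le_one] at hx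
    rcases lt_or_eq_of_le hx.2 with hx1 | rfl
    · rw [Int.fract_eq_self.mpr ⟨hx.1, hx1⟩]
    · rw [show Int.fract (1:ℝ) = 0 by simp, g01]
  have intHle : ∫ x : AddCircle (1:ℝ), H x ≤ b - a + 2*δ := by
    rw [intH]
    have := trap_integral_le (a - δ) (b + δ) δ hδ (by linarith) (by linarith) (by linarith)
    rw [← hh] at this
    linarith
  have intGge : b - a - 2*δ ≤ ∫ x : AddCircle (1:ℝ), G x := by
    rw [intG]
    have := trap_integral_ge a b δ hδ (by linarith) (by linarith) (by linarith)
    rw [← hg] at this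
    linarith
  -- counting bounds
  set P : ℕ → Prop := fun n => Int.fract ((n:ℝ) * α + θ) ∈ Set.Ico a b with hP
  have card_le : ∀ N : ℕ, (((Finset.range N).filter P).card : ℝ)
      ≤ ∑ n ∈ Finset.range N, h (Int.fract ((n:ℝ) * α + θ)) := by
    intro N
    calc (((Finset.range N).filter P).card : ℝ)
        = ∑ n ∈ (Finset.range N).filter P, (1:ℝ) := by simp
      _ = ∑ n ∈ (Finset.range N).filter P, h (Int.fract ((n:ℝ) * α + θ)) := by
          refine Finset.sum_congr rfl fun n hn => ?_
          have hmem := (Finset.mem_filter.mp hn).2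
          rw [hh, trap_eq_one _ _ _ hδ (by linarith [hmem.1]) (by linarith [hmem.2.le])]
      _ ≤ ∑ n ∈ Finset.range N, h (Int.fract ((n:ℝ) * α + θ)) :=
          Finset.sum_le_sum_of_subset_of_nonneg (Finset.filter_subset _ _)
            (fun n _ _ => trap_nonneg _ _ _ _)
  have le_card : ∀ N : ℕ, (∑ n ∈ Finset.range N, g (Int.fract ((n:ℝ) * α + θ)))
      ≤ (((Finset.range N).filter P).card : ℝ) := by
    intro N
    calc (∑ n ∈ Finset.range N, g (Int.fract ((n:ℝ) * α + θ)))
        = ∑ n ∈ (Finset.range N).filter P, g (Int.fract ((n:ℝ) * α + θ)) := by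
          refine (Finset.sum_filter_of_ne fun n hn hne => ?_).symm
          by_contra hmem
          simp only [hP, Set.mem_Ico, not_and_or, not_le, not_lt] at hmem
          rcases hmem with hlt | hge
          · exact hne (by rw [hg, trap_eq_zero_left _ _ _ hδ hlt.le])
          · exact hne (by rw [hg, trap_eq_zero_right _ _ _ hδ hge])
      _ ≤ ∑ n ∈ (Finset.range N).filter P, (1:ℝ) :=
          Finset.sum_le_sum fun n _ => trap_le_one _ _ _ _
      _ = (((Finset.range N).filter P).card : ℝ) := by simp
  have hHt := weyl_real α θ hirr H
  have hGt := weyl_real α θ hirr G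
  simp only [HH, GG] at hHt hGt
  rw [Metric.tendsto_atTop] at hHt hGt
  obtain ⟨N₁, hN₁⟩ := hHt δ hδ
  obtain ⟨N₂, hN₂⟩ := hGt δ hδ
  refine ⟨max (max N₁ N₂) 1, fun N hN => ?_⟩
  have hNpos : 0 < (N:ℝ) := by
    have : (1:ℕ) ≤ N := le_trans (le_max_right _ _) hN
    exact_mod_cast this
  have b1 := hN₁ N (le_trans (le_max_left _ _) (le_trans (le_max_left _ _) hN))
  have b2 := hN₂ N (le_trans (le_max_right _ _) (le_trans (le_max_left _ _) hN))
  rw [Real.dist_eq, abs_sub_lt_iff] at b1 b2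
  have u1 : (((Finset.range N).filter P).card : ℝ) / N
      ≤ (∑ n ∈ Finset.range N, h (Int.fract ((n:ℝ) * α + θ))) / N :=
    div_le_div_of_nonneg_right (card_le N) hNpos.le
  have u2 : (∑ n ∈ Finset.range N, g (Int.fract ((n:ℝ) * α + θ))) / N
      ≤ (((Finset.range N).filter P).card : ℝ) / N :=
    div_le_div_of_nonneg_right (le_card N) hNpos.le
  rw [Real.dist_eq, abs_sub_lt_iff]
  constructor
  · linarith [b1.1, u1, intHle]
  · linarith [b2.2, u2, intGge]

lemma fract_shift (y s : ℝ) : Int.fract (y + s) = Int.fract (Int.fract y + s) := by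
  conv_lhs => rw [← Int.floor_add_fract y]
  rw [add_assoc, Int.fract_intCast_add]

lemma fract_eq_sub_one {z : ℝ} (h0 : 1 ≤ z) (h1 : z < 2) : Int.fract z = z - 1 := by
  have h : Int.fract ((z - 1) + ((1:ℤ):ℝ)) = Int.fract (z - 1) := Int.fract_add_intCast _ _
  push_cast at h
  rw [sub_add_cancel] at h
  rw [h]
  exact Int.fract_eq_self.mpr ⟨by linarith, by linarith⟩

lemma key_iff (α : ℝ) (h0 : 0 < α) (h1 : α < 1) (c : ℕ)
    (hca : (c:ℝ) * α < 1) (hca' : 1 < ((c:ℝ)+1) * α) (y : ℝ) :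
    ((1 - α ≤ Int.fract y) ∧
     (∀ j : ℕ, 1 ≤ j → j ≤ c → ¬(1 - α ≤ Int.fract (y + j * α))) ∧
     (1 - α ≤ Int.fract (y + ((c:ℝ)+1) * α)))
    ↔ Int.fract y ∈ Set.Ico (1-α) (2 - ((c:ℝ)+1) * α) := by
  set x := Int.fract y with hx
  have hx0 : 0 ≤ x := Int.fract_nonneg y
  have hx1 : x < 1 := Int.fract_lt_one y
  have hshift : ∀ s : ℝ, Int.fract (y + s) = Int.fract (x + s) := fun s => fract_shift y s
  constructor
  · rintro ⟨hA, hB, _⟩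
    refine ⟨hA, ?_⟩
    by_contra hxb
    push_neg at hxb
    set t : ℝ := x - (1 - α) with ht
    have ht0 : 0 ≤ t := by linarith
    have htα : t < α := by linarith
    have htc : 1 - (c:ℝ)*α ≤ t := by linarith
    set j₀ : ℕ := ⌈(1 - t)/α⌉₊ with hj₀
    have h1t : 0 < 1 - t := by linarith
    have hj₀1 : 1 ≤ j₀ := Nat.one_le_iff_ne_zero.mpr (by
      simp only [hj₀, ne_eq, Nat.ceil_eq_zero, not_le]
      positivity)
    have hj₀c : j₀ ≤ c := Nat.ceil_le.mpr ((div_le_iff₀ h0).mpr (by linarith))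
    have hge : 1 - t ≤ (j₀:ℝ) * α := by
      have := Nat.le_ceil ((1 - t)/α)
      rw [← hj₀] at this
      calc 1 - t = ((1-t)/α) * α := by field_simp
        _ ≤ (j₀:ℝ) * α := by
          apply mul_le_mul_of_nonneg_right this h0.le
    have hlt : (j₀:ℝ) * α < 1 - t + α := by
      have := Nat.ceil_lt_add_one (by positivity : (0:ℝ) ≤ (1 - t)/α)
      rw [← hj₀] at this
      calc (j₀:ℝ) * α < ((1-t)/α + 1) * α := by
            apply mul_lt_mul_of_pos_right this h0
        _ = 1 - t + α := by field_simp
    refine hB j₀ hj₀1 hj₀c ?_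
    rw [hshift]
    have hfr : Int.fract (x + j₀ * α) = x + j₀ * α - 1 := by
      apply fract_eq_sub_one
      · have : x = 1 - α + t := by linarith
        rw [this]; nlinarith
      · have : x = 1 - α + t := by linarith
        rw [this]; nlinarith
    rw [hfr]
    have : x = 1 - α + t := by linarith
    nlinarith
  · rintro ⟨hA, hxb⟩
    have hxb' : x < 2 - ((c:ℝ)+1)*α := hxb
    set t : ℝ := x - (1 - α) with ht
    have ht0 : 0 ≤ t := by linarith
    have htc : t < 1 - (c:ℝ)*α := by linarith
    refine ⟨hA, ?_, ?_⟩
    · intro j hj1 hjc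
      rw [hshift]
      have hjr : (1:ℝ) ≤ (j:ℝ) := by exact_mod_cast hj1
      have hjcr : (j:ℝ) ≤ (c:ℝ) := by exact_mod_cast hjc
      have hfr : Int.fract (x + j * α) = x + j * α - 1 := by
        apply fract_eq_sub_one
        · have : x = 1 - α + t := by linarith
          rw [this]; nlinarith
        · have : x = 1 - α + t := by linarith
          rw [this]; nlinarith
      rw [hfr]
      have hxeq : x = 1 - α + t := by linarith
      rw [hxeq]
      intro hcon
      nlinarith
    · rw [hshift]
      have hfr : Int.fract (x + ((c:ℝ)+1) * α) = x + ((c:ℝ)+1) * α - 1 := by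
        apply fract_eq_sub_one
        · nlinarith
        · nlinarith
      rw [hfr]
      nlinarith

lemma sturmian_eq_one_iff (α θ : ℝ) (m : ℤ) :
    sturmian α θ m = 1 ↔ 1 - α ≤ Int.fract ((m : ℝ) * α + θ) := by
  unfold sturmian
  split_ifs with h
  · simp [h.1]
  · constructor
    · intro h01; exact absurd h01 (by norm_num)
    · intro hle; exact absurd ⟨hle, Int.fract_lt_one _⟩ h

lemma sturmian_eq_zero_iff (α θ : ℝ) (m : ℤ) :
    sturmian α θ m = 0 ↔ ¬(1 - α ≤ Int.fract ((m : ℝ) * α + θ)) := by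
  unfold sturmian
  split_ifs with h
  · constructor
    · intro h10; exact absurd h10 (by norm_num)
    · intro hn; exact absurd h.1 hn
  · constructor
    · intro _ hle; exact h ⟨hle, Int.fract_lt_one _⟩
    · intro _; rfl

end

open scoped Classical in
/-- The frequency of the word `W = 1 0^{c₁} 1` in the Sturmian sequence of slope `α`
exists and equals `1 - c₁·α`, where `c₁ = ⌊1/α⌋`. -/
theorem stmt_7 (α θ : ℝ) (hirr : Irrational α) (h0 : 0 < α) (h1 : α < 1)
    (hθ : θ ∈ Set.Ico (0 : ℝ) 1) (c₁ : ℕ) (hc₁ : c₁ = ⌊1 / α⌋₊) :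
    Tendsto
      (fun N : ℕ =>
        (((Finset.range N).filter (fun n : ℕ =>
            sturmian α θ (n : ℤ) = 1 ∧
            (∀ j : ℕ, 1 ≤ j → j ≤ c₁ → sturmian α θ ((n : ℤ) + j) = 0) ∧
            sturmian α θ ((n : ℤ) + c₁ + 1) = 1)).card : ℝ) / N)
      atTop (nhds (1 - (c₁ : ℝ) * α)) := by
  have hαinv : (1:ℝ) ≤ 1/α := by
    rw [le_div_iff₀ h0]; linarith
  have hc₁0 : 1 ≤ c₁ := by
    rw [hc₁]; exact Nat.le_floor (by exact_mod_cast hαinv)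
  have hca : (c₁:ℝ) * α < 1 := by
    have hle : (c₁:ℝ) ≤ 1/α := by
      rw [hc₁]; exact Nat.floor_le (by positivity)
    have hle' : (c₁:ℝ) * α ≤ 1 := by
      rw [← le_div_iff₀ h0]; exact hle
    rcases lt_or_eq_of_le hle' with h | h
    · exact h
    · exfalso
      have : Irrational ((c₁:ℕ) * α) := (hirr.natCast_mul (by omega))
      exact this.ne_int 1 (by push_cast; exact_mod_cast h)
  have hca' : 1 < ((c₁:ℝ)+1) * α := by
    have := Nat.lt_floor_add_one (1/α)
    rw [← hc₁] at this
    calc (1:ℝ) = (1/α) * α := by field_simp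
      _ < ((c₁:ℝ)+1) * α := by apply mul_lt_mul_of_pos_right this h0
  have hb1 : 2 - ((c₁:ℝ)+1) * α < 1 := by linarith
  have hab : (1:ℝ) - α < 2 - ((c₁:ℝ)+1) * α := by nlinarith
  have ha0 : (0:ℝ) < 1 - α := by linarith
  have hmain := equid_Ico α θ hirr ha0 hab hb1
  have hlim : (1:ℝ) - (c₁:ℝ)*α = (2 - ((c₁:ℝ)+1) * α) - (1 - α) := by ring
  rw [hlim]
  have hfeq : ∀ N : ℕ, ((Finset.range N).filter (fun n : ℕ =>
      sturmian α θ (n : ℤ) = 1 ∧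
      (∀ j : ℕ, 1 ≤ j → j ≤ c₁ → sturmian α θ ((n : ℤ) + j) = 0) ∧
      sturmian α θ ((n : ℤ) + c₁ + 1) = 1))
      = ((Finset.range N).filter (fun n : ℕ =>
        Int.fract ((n:ℝ) * α + θ) ∈ Set.Ico (1-α) (2 - ((c₁:ℝ)+1) * α))) := by
    intro N
    refine Finset.filter_congr fun n _ => ?_
    rw [← key_iff α h0 h1 c₁ hca hca' ((n:ℝ) * α + θ)]
    have e1 : (((n:ℤ) : ℝ)) * α + θ = (n:ℝ) * α + θ := by push_cast; ring
    have e2 : ∀ j : ℕ, ((Int.cast ((n:ℤ) + (j:ℤ)) : ℝ)) * α + θ = ((n:ℝ) * α + θ) + (j:ℝ) * α := by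
      intro j; push_cast; ring
    have e3 : ((Int.cast ((n:ℤ) + (c₁:ℤ) + 1) : ℝ)) * α + θ = ((n:ℝ) * α + θ) + ((c₁:ℝ)+1) * α := by
      push_cast; ring
    constructor
    · rintro ⟨hα1, hα2, hα3⟩
      refine ⟨?_, ?_, ?_⟩
      · rw [sturmian_eq_one_iff, e1] at hα1; exact hα1
      · intro j hj1 hjc
        have := hα2 j hj1 hjc
        rw [sturmian_eq_zero_iff, e2 j] at this
        exact this
      · rw [sturmian_eq_one_iff, e3] at hα3; exact hα3
    · rintro ⟨hα1, hα2, hα3⟩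
      refine ⟨?_, ?_, ?_⟩
      · rw [sturmian_eq_one_iff, e1]; exact hα1
      · intro j hj1 hjc
        rw [sturmian_eq_zero_iff, e2 j]
        exact hα2 j hj1 hjc
      · rw [sturmian_eq_one_iff, e3]; exact hα3
  refine hmain.congr fun N => ?_
  rw [hfeq N]
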